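/- Fix real constants p, q, r, s. The forward map Φ and the backward map Ψ are mutually inverse: (i) for all (T,X,Y,Z) with ζ(T,Z) ≠ 0 and ξ(T,Z) ≠ 0, Ψ(Φ(T,X,Y,Z)) = (T,X,Y,Z); (ii) for all (t,x,y,z) with f(t,z) ≠ 0 and g(t,z) ≠ 0, Φ(Ψ(t,x,y,z)) = (t,x,y,z). Moreover, writing Φ(T,X,Y,Z) = (t,x,y,z), one has t − z = T − Z. -/

import Mathlib

noncomputable section

/-- ζ(T,Z) = p + q(T−Z)/√2. -/
def zeta (p q T Z : ℝ) : ℝ := p + q * ((T - Z) / Real.sqrt 2)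

/-- ξ(T,Z) = r + s(T−Z)/√2. -/
def xi (r s T Z : ℝ) : ℝ := r + s * ((T - Z) / Real.sqrt 2)

/-- The forward map Φ : (T,X,Y,Z) ↦ (t,x,y,z) from Fermi coordinates to the
original wave coordinates in the post-wave region B, Eqs. (FT2)-(FT5). -/
def fwd (p q r s : ℝ) : ℝ × ℝ × ℝ × ℝ → ℝ × ℝ × ℝ × ℝ :=
  fun (T, X, Y, Z) =>
    (T - q * X ^ 2 / (2 * Real.sqrt 2 * zeta p q T Z)
       - s * Y ^ 2 / (2 * Real.sqrt 2 * xi r s T Z),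
     X / zeta p q T Z,
     Y / xi r s T Z,
     Z - q * X ^ 2 / (2 * Real.sqrt 2 * zeta p q T Z)
       - s * Y ^ 2 / (2 * Real.sqrt 2 * xi r s T Z))

/-- f(t,z) = p + q(t−z)/√2. -/
def fmet (p q t z : ℝ) : ℝ := p + q * ((t - z) / Real.sqrt 2)

/-- g(t,z) = r + s(t−z)/√2. -/
def gmet (r s t z : ℝ) : ℝ := r + s * ((t - z) / Real.sqrt 2)

/-- The backward map Ψ : (t,x,y,z) ↦ (T,X,Y,Z), Eqs. (FT7.1)-(FT7.4). -/
def bwd (p q r s : ℝ) : ℝ × ℝ × ℝ × ℝ → ℝ × ℝ × ℝ × ℝ :=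
  fun (t, x, y, z) =>
    (t + (Real.sqrt 2 * (p * q * x ^ 2 + r * s * y ^ 2)
          + (q ^ 2 * x ^ 2 + s ^ 2 * y ^ 2) * (t - z)) / 4,
     x * fmet p q t z,
     y * gmet r s t z,
     z + (Real.sqrt 2 * (p * q * x ^ 2 + r * s * y ^ 2)
          + (q ^ 2 * x ^ 2 + s ^ 2 * y ^ 2) * (t - z)) / 4)

lemma auxP (w p q u X a : ℝ) (hw2 : w ^ 2 = 2) (hw0 : w ≠ 0)
    (ha : a ≠ 0) (haw : a * w = p * w + q * u) :
    w * (p * q * (X / a) ^ 2) + q ^ 2 * (X / a) ^ 2 * u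
      = 4 * (q * X ^ 2 / (2 * w * a)) := by
  field_simp
  linear_combination 2*q*X^2*a*hw2 - 2*q*X^2*w*haw

lemma auxQ (w p q u x a : ℝ) (hw2 : w ^ 2 = 2) (hw0 : w ≠ 0)
    (ha : a ≠ 0) (haw : a * w = p * w + q * u) :
    q * (x * a) ^ 2 / (2 * w * a)
      = (w * (p * q * x ^ 2) + q ^ 2 * x ^ 2 * u) / 4 := by
  field_simp
  linear_combination -2*q*x^2*a*hw2 + 2*q*x^2*w*haw

/-- The Fermi coordinate transformation Φ and its inverse Ψ are mutually
inverse (where the denominators are nonzero), and Φ preserves t − z = T − Z. -/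
theorem fermi_transformation_inverse (p q r s : ℝ) :
    (∀ T X Y Z : ℝ, zeta p q T Z ≠ 0 → xi r s T Z ≠ 0 →
      bwd p q r s (fwd p q r s (T, X, Y, Z)) = (T, X, Y, Z)) ∧
    (∀ t x y z : ℝ, fmet p q t z ≠ 0 → gmet r s t z ≠ 0 →
      fwd p q r s (bwd p q r s (t, x, y, z)) = (t, x, y, z)) ∧
    (∀ T X Y Z : ℝ,
      (fwd p q r s (T, X, Y, Z)).1 - (fwd p q r s (T, X, Y, Z)).2.2.2 = T - Z) := by
  obtain ⟨w, hw, hw2⟩ : ∃ w : ℝ, w = Real.sqrt 2 ∧ w ^ 2 = 2 :=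
    ⟨Real.sqrt 2, rfl, Real.sq_sqrt (by norm_num)⟩
  have hw0 : w ≠ 0 := by intro h; rw [h] at hw2; norm_num at hw2
  refine ⟨?_, ?_, ?_⟩
  · intro T X Y Z hz hx
    simp only [fwd, bwd, fmet, gmet, zeta, xi, ← hw, Prod.mk.injEq] at *
    have haw : (p + q * ((T - Z) / w)) * w = p * w + q * (T - Z) := by field_simp
    have hbw : (r + s * ((T - Z) / w)) * w = r * w + s * (T - Z) := by field_simp
    have e1 := auxP w p q (T - Z) X _ hw2 hw0 hz haw
    have e2 := auxP w r s (T - Z) Y _ hw2 hw0 hx hbw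
    have hinva := mul_inv_cancel₀ hz
    have hinvb := mul_inv_cancel₀ hx
    refine ⟨?_, ?_, ?_, ?_⟩
    · linear_combination (e1 + e2) / 4
    · linear_combination X * hinva
    · linear_combination Y * hinvb
    · linear_combination (e1 + e2) / 4
  · intro t x y z hf hg
    simp only [fwd, bwd, fmet, gmet, zeta, xi, ← hw, Prod.mk.injEq] at *
    have haw : (p + q * ((t - z) / w)) * w = p * w + q * (t - z) := by field_simp
    have hbw : (r + s * ((t - z) / w)) * w = r * w + s * (t - z) := by field_simp
    have e1 := auxQ w p q (t - z) x _ hw2 hw0 hf haw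
    have e2 := auxQ w r s (t - z) y _ hw2 hw0 hg hbw
    have hinva := mul_inv_cancel₀ hf
    have hinvb := mul_inv_cancel₀ hg
    refine ⟨?_, ?_, ?_, ?_⟩
    · linear_combination -e1 - e2
    · linear_combination x * hinva
    · linear_combination y * hinvb
    · linear_combination -e1 - e2
  · intro T X Y Z
    simp only [fwd]
    ring
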